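/- Suppose h : ℝ → ℝ has property (L), let U = {x ∈ ℝ : h(x) > 0}, and let I ⊆ U be a closed bounded interval satisfying max{|I|, inf_{x∈I} h(x), sup_{x∈I} h(x)} ≤ 6 min{|I|, inf_{x∈I} h(x), sup_{x∈I} h(x)}. Let g : U → ℂ satisfy at least one of: (a) g is C¹ on U and h(x)|g′(x)| ≤ K|g(x)| for all x ∈ U; or (b) for some α ∈ [0,1] and constants c > 0, K ≥ 0, one has |g(x) − g(y)| ≤ K |x−y|^α |g(x)| / (h(x))^α whenever x, y ∈ U and |x−y| ≤ c h(x). Then sup_{x∈I} |g(x)| ≤ C inf_{x∈I} |g(x)|, where C depends only on K in case (a), and only on K, α, c in case (b). -/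

import Mathlib

open MeasureTheory Real Set
open scoped ENNReal NNReal Topology Classical

noncomputable section

/-- A continuous nonnegative `h : ℝ → ℝ` has property (L) if for every bounded interval `J`,
either `sup_J h ≤ 2 inf_J h` or `sup_J h < 2|J|`. -/
def PropertyL (h : ℝ → ℝ) : Prop :=
  Continuous h ∧ (∀ x, 0 ≤ h x) ∧
    ∀ a b : ℝ, a ≤ b →
      sSup (h '' Set.Icc a b) ≤ 2 * sInf (h '' Set.Icc a b) ∨
        sSup (h '' Set.Icc a b) < 2 * (b - a)

lemma harnack_gronwall {g : ℝ → ℂ} {M u v : ℝ} (huv : u ≤ v)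
    (hd : ∀ t ∈ Set.Icc u v, HasDerivAt g (deriv g t) t)
    (hb : ∀ t ∈ Set.Icc u v, ‖deriv g t‖ ≤ M * ‖g t‖) :
    ‖g v‖ ≤ Real.exp (M * (v - u)) * ‖g u‖ ∧
      ‖g u‖ ≤ Real.exp (M * (v - u)) * ‖g v‖ := by
  constructor
  · have h1 := norm_le_gronwallBound_of_norm_deriv_right_le
      (f := g) (f' := deriv g) (δ := ‖g u‖) (K := M) (ε := 0) (a := u) (b := v)
      (fun x hx => (hd x hx).continuousAt.continuousWithinAt)
      (fun x hx => (hd x (Set.Ico_subset_Icc_self hx)).hasDerivWithinAt)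
      le_rfl
      (fun x hx => by simpa using hb x (Set.Ico_subset_Icc_self hx))
      v (Set.right_mem_Icc.2 huv)
    rwa [gronwallBound_ε0, mul_comm] at h1
  · have hmem : ∀ t ∈ Set.Icc u v, u + v - t ∈ Set.Icc u v := fun t ht =>
      ⟨by linarith [ht.2], by linarith [ht.1]⟩
    have hφ : ∀ t : ℝ, HasDerivAt (fun s : ℝ => u + v - s) (-1 : ℝ) t := fun t => by
      simpa using (hasDerivAt_id t).const_sub (u + v)
    have hfd : ∀ t ∈ Set.Icc u v,
        HasDerivAt (fun s => g (u + v - s)) (-(deriv g (u + v - t))) t := by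
      intro t ht
      have := (hd _ (hmem t ht)).scomp t (hφ t)
      simpa [Function.comp_def, neg_smul, one_smul] using this
    have h1 := norm_le_gronwallBound_of_norm_deriv_right_le
      (f := fun s => g (u + v - s)) (f' := fun t => -(deriv g (u + v - t)))
      (δ := ‖g (u + v - u)‖) (K := M) (ε := 0) (a := u) (b := v)
      (fun x hx => (hfd x hx).continuousAt.continuousWithinAt)
      (fun x hx => (hfd x (Set.Ico_subset_Icc_self hx)).hasDerivWithinAt)
      le_rfl
      (fun x hx => by
        simpa using hb _ (hmem x (Set.Ico_subset_Icc_self hx)))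
      v (Set.right_mem_Icc.2 huv)
    rw [gronwallBound_ε0, mul_comm] at h1
    simpa [show u + v - v = u by ring, show u + v - u = v by ring] using h1

lemma harnack_chain {g : ℝ → ℂ} {a b s D : ℝ} (hs : 0 < s) (hD : 1 ≤ D)
    (step : ∀ p ∈ Set.Icc a b, ∀ q ∈ Set.Icc a b, |p - q| ≤ s → ‖g q‖ ≤ D * ‖g p‖) :
    ∀ n : ℕ, ∀ x ∈ Set.Icc a b, ∀ y ∈ Set.Icc a b, x ≤ y → y - x ≤ n * s →
      ‖g y‖ ≤ D ^ n * ‖g x‖ ∧ ‖g x‖ ≤ D ^ n * ‖g y‖ := by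
  intro n
  induction n with
  | zero =>
    intro x hx y hy hxy hle
    have : x = y := le_antisymm hxy (by simpa using hle)
    subst this; simp
  | succ n ih =>
    intro x hx y hy hxy hle
    set z := min (x + s) y with hz
    have hxz : x ≤ z := le_min (by linarith) hxy
    have hzy : z ≤ y := min_le_right _ _
    have hzmem : z ∈ Set.Icc a b := ⟨le_trans hx.1 hxz, le_trans hzy hy.2⟩
    have hzle : z ≤ x + s := min_le_left _ _
    have hdist : |x - z| ≤ s := by
      rw [abs_sub_comm, abs_of_nonneg (by linarith)]
      linarith
    have hrest : y - z ≤ n * s := by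
      rcases le_total (x + s) y with h' | h'
      · have hzz : z = x + s := min_eq_left h'
        have hle' : y - x ≤ (n + 1 : ℕ) * s := hle
        push_cast at hle'
        rw [hzz]; linarith
      · have hzz : z = y := min_eq_right h'
        rw [hzz]
        have : (0:ℝ) ≤ n * s := by positivity
        linarith
    obtain ⟨ih1, ih2⟩ := ih z hzmem y hy hzy hrest
    have s1 := step x hx z hzmem hdist
    have s2 := step z hzmem x hx (by rwa [abs_sub_comm] at hdist)
    have hDn : (0:ℝ) ≤ D ^ n := by positivity
    have hD0 : (0:ℝ) ≤ D := by linarith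
    constructor
    · calc ‖g y‖ ≤ D ^ n * ‖g z‖ := ih1
        _ ≤ D ^ n * (D * ‖g x‖) := mul_le_mul_of_nonneg_left s1 hDn
        _ = D ^ (n + 1) * ‖g x‖ := by ring
    · calc ‖g x‖ ≤ D * ‖g z‖ := s2
        _ ≤ D * (D ^ n * ‖g y‖) := mul_le_mul_of_nonneg_left ih2 hD0
        _ = D ^ (n + 1) * ‖g y‖ := by ring

lemma sSup_le_mul_sInf_of_pointwise {g : ℝ → ℂ} {a b C : ℝ} (hab : a ≤ b) (hC : 0 < C)
    (H : ∀ x ∈ Set.Icc a b, ∀ y ∈ Set.Icc a b, ‖g y‖ ≤ C * ‖g x‖) :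
    sSup ((fun x => ‖g x‖) '' Set.Icc a b) ≤ C * sInf ((fun x => ‖g x‖) '' Set.Icc a b) := by
  have hne : ((fun x => ‖g x‖) '' Set.Icc a b).Nonempty :=
    (Set.nonempty_Icc.2 hab).image _
  apply csSup_le hne
  rintro v ⟨y, hy, rfl⟩
  rw [← div_le_iff₀' hC]
  apply le_csInf hne
  rintro w ⟨x, hx, rfl⟩
  rw [div_le_iff₀ hC]
  have := H x hx y hy
  linarith

lemma setupL {h : ℝ → ℝ} (hL : PropertyL h) {a b : ℝ} (hab : a ≤ b)
    (hsub : Set.Icc a b ⊆ {x : ℝ | 0 < h x})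
    (hmm : max (b - a) (max (sInf (h '' Set.Icc a b)) (sSup (h '' Set.Icc a b))) ≤
      6 * min (b - a) (min (sInf (h '' Set.Icc a b)) (sSup (h '' Set.Icc a b)))) :
    0 < b - a ∧ ∀ t ∈ Set.Icc a b, (b - a) / 6 ≤ h t := by
  obtain ⟨hc, hnn, -⟩ := hL
  set S := h '' Set.Icc a b with hS
  have hmema : a ∈ Set.Icc a b := Set.left_mem_Icc.2 hab
  have hbdd : BddAbove S := (isCompact_Icc.image_of_continuousOn hc.continuousOn).bddAbove
  have hbddb : BddBelow S := ⟨0, fun y hy => by obtain ⟨x, -, rfl⟩ := hy; exact hnn x⟩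
  have hha : 0 < h a := hsub hmema
  have hsup : h a ≤ sSup S := le_csSup hbdd ⟨a, hmema, rfl⟩
  have h1 : sSup S ≤ max (b - a) (max (sInf S) (sSup S)) := le_max_of_le_right (le_max_right _ _)
  have h2 : min (b - a) (min (sInf S) (sSup S)) ≤ b - a := min_le_left _ _
  have hpos : 0 < b - a := by linarith
  refine ⟨hpos, fun t ht => ?_⟩
  have h3 : b - a ≤ max (b - a) (max (sInf S) (sSup S)) := le_max_left _ _
  have h4 : min (b - a) (min (sInf S) (sSup S)) ≤ sInf S :=
    le_trans (min_le_right _ _) (min_le_left _ _)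
  have h5 : sInf S ≤ h t := csInf_le hbddb ⟨t, ht, rfl⟩
  linarith

theorem comparable_on_interval_of_propertyL :
    (∀ K : ℝ, 0 ≤ K → ∃ C : ℝ, 0 < C ∧
      ∀ h : ℝ → ℝ, PropertyL h → ∀ a b : ℝ, a ≤ b →
        Set.Icc a b ⊆ {x : ℝ | 0 < h x} →
        max (b - a) (max (sInf (h '' Set.Icc a b)) (sSup (h '' Set.Icc a b))) ≤
          6 * min (b - a) (min (sInf (h '' Set.Icc a b)) (sSup (h '' Set.Icc a b))) →
        ∀ g : ℝ → ℂ, ContDiffOn ℝ 1 g {x : ℝ | 0 < h x} →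
          (∀ x ∈ {x : ℝ | 0 < h x}, h x * ‖deriv g x‖ ≤ K * ‖g x‖) →
          sSup ((fun x => ‖g x‖) '' Set.Icc a b) ≤
            C * sInf ((fun x => ‖g x‖) '' Set.Icc a b)) ∧
    (∀ K α c : ℝ, 0 ≤ K → 0 ≤ α → α ≤ 1 → 0 < c → ∃ C : ℝ, 0 < C ∧
      ∀ h : ℝ → ℝ, PropertyL h → ∀ a b : ℝ, a ≤ b →
        Set.Icc a b ⊆ {x : ℝ | 0 < h x} →
        max (b - a) (max (sInf (h '' Set.Icc a b)) (sSup (h '' Set.Icc a b))) ≤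
          6 * min (b - a) (min (sInf (h '' Set.Icc a b)) (sSup (h '' Set.Icc a b))) →
        ∀ g : ℝ → ℂ,
          (∀ x ∈ {x : ℝ | 0 < h x}, ∀ y ∈ {x : ℝ | 0 < h x}, |x - y| ≤ c * h x →
            ‖g x - g y‖ ≤ K * |x - y| ^ α * ‖g x‖ / h x ^ α) →
          sSup ((fun x => ‖g x‖) '' Set.Icc a b) ≤
            C * sInf ((fun x => ‖g x‖) '' Set.Icc a b)) := by
  constructor
  · -- case (a)
    intro K hK
    refine ⟨Real.exp (6 * K), Real.exp_pos _, ?_⟩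
    intro h hL a b hab hsub hmm g hg hbound
    obtain ⟨hpos, hlow⟩ := setupL hL hab hsub hmm
    have hU : IsOpen {x : ℝ | 0 < h x} := isOpen_lt continuous_const hL.1
    have hd : ∀ t ∈ Set.Icc a b, HasDerivAt g (deriv g t) t := by
      intro t ht
      exact (((hg.differentiableOn one_ne_zero) t (hsub ht)).differentiableAt
        (hU.mem_nhds (hsub ht))).hasDerivAt
    set M := 6 * K / (b - a) with hM
    have hM0 : 0 ≤ M := by positivity
    have hb' : ∀ t ∈ Set.Icc a b, ‖deriv g t‖ ≤ M * ‖g t‖ := by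
      intro t ht
      have h1 := hbound t (hsub ht)
      have h2 := hlow t ht
      rw [hM, div_mul_eq_mul_div, le_div_iff₀ hpos]
      nlinarith [norm_nonneg (deriv g t), norm_nonneg (g t)]
    have hmono : ∀ u v : ℝ, u ∈ Set.Icc a b → v ∈ Set.Icc a b → u ≤ v →
        Real.exp (M * (v - u)) ≤ Real.exp (6 * K) := by
      intro u v hu hv huv
      apply Real.exp_le_exp.2
      have hvu : v - u ≤ b - a := by
        have := hu.1; have := hv.2; linarith
      calc M * (v - u) ≤ M * (b - a) := mul_le_mul_of_nonneg_left hvu hM0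
        _ = 6 * K := div_mul_cancel₀ _ (ne_of_gt hpos)
    have key : ∀ x ∈ Set.Icc a b, ∀ y ∈ Set.Icc a b, ‖g y‖ ≤ Real.exp (6 * K) * ‖g x‖ := by
      intro x hx y hy
      rcases le_total x y with hxy | hxy
      · have hsubI : Set.Icc x y ⊆ Set.Icc a b := Set.Icc_subset_Icc hx.1 hy.2
        have h1 := (harnack_gronwall hxy (fun t ht => hd t (hsubI ht))
          (fun t ht => hb' t (hsubI ht))).1
        calc ‖g y‖ ≤ Real.exp (M * (y - x)) * ‖g x‖ := h1
          _ ≤ Real.exp (6 * K) * ‖g x‖ :=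
            mul_le_mul_of_nonneg_right (hmono x y hx hy hxy) (norm_nonneg _)
      · have hsubI : Set.Icc y x ⊆ Set.Icc a b := Set.Icc_subset_Icc hy.1 hx.2
        have h1 := (harnack_gronwall hxy (fun t ht => hd t (hsubI ht))
          (fun t ht => hb' t (hsubI ht))).2
        calc ‖g y‖ ≤ Real.exp (M * (x - y)) * ‖g x‖ := h1
          _ ≤ Real.exp (6 * K) * ‖g x‖ :=
            mul_le_mul_of_nonneg_right (hmono y x hy hx hxy) (norm_nonneg _)
    exact sSup_le_mul_sInf_of_pointwise hab (Real.exp_pos _) key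
  · -- case (b)
    intro K α c hK hα hα1 hc
    set m := min c 1 with hm
    have hm0 : 0 < m := lt_min hc one_pos
    have hm1 : m ≤ 1 := min_le_right _ _
    have hmc : m ≤ c := min_le_left _ _
    set N := ⌈(6:ℝ) / m⌉₊ with hN
    refine ⟨(1 + K) ^ N, by positivity, ?_⟩
    intro h hL a b hab hsub hmm g hb
    obtain ⟨hpos, hlow⟩ := setupL hL hab hsub hmm
    set s := m * (b - a) / 6 with hs
    have hs0 : 0 < s := by positivity
    have step : ∀ p ∈ Set.Icc a b, ∀ q ∈ Set.Icc a b, |p - q| ≤ s →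
        ‖g q‖ ≤ (1 + K) * ‖g p‖ := by
      intro p hp q hq hpq
      have hhp : 0 < h p := hsub hp
      have hplow := hlow p hp
      have hc1 : |p - q| ≤ c * h p := by
        calc |p - q| ≤ s := hpq
          _ = m * ((b - a) / 6) := by rw [hs]; ring
          _ ≤ c * h p := mul_le_mul hmc hplow (by positivity) (le_of_lt hc)
      have hest := hb p (hsub hp) q (hsub hq) hc1
      have hle1 : |p - q| ≤ h p := by
        calc |p - q| ≤ s := hpq
          _ = m * ((b - a) / 6) := by rw [hs]; ring
          _ ≤ 1 * h p := mul_le_mul hm1 hplow (by positivity) zero_le_one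
          _ = h p := one_mul _
      have hpow : |p - q| ^ α ≤ h p ^ α := Real.rpow_le_rpow (abs_nonneg _) hle1 hα
      have hppos : 0 < h p ^ α := Real.rpow_pos_of_pos hhp α
      have h2 : K * |p - q| ^ α * ‖g p‖ / h p ^ α ≤ K * ‖g p‖ := by
        rw [div_le_iff₀ hppos]
        nlinarith [norm_nonneg (g p),
          mul_le_mul_of_nonneg_left hpow (mul_nonneg hK (norm_nonneg (g p)))]
      calc ‖g q‖ = ‖g p - (g p - g q)‖ := by rw [sub_sub_cancel]
        _ ≤ ‖g p‖ + ‖g p - g q‖ := norm_sub_le _ _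
        _ ≤ ‖g p‖ + K * ‖g p‖ := by linarith
        _ = (1 + K) * ‖g p‖ := by ring
    have hNs : b - a ≤ N * s := by
      have h6 : (6:ℝ) / m ≤ N := Nat.le_ceil _
      have heq : (6 / m) * s = b - a := by
        rw [hs]; field_simp
      have := mul_le_mul_of_nonneg_right h6 (le_of_lt hs0)
      linarith
    have key : ∀ x ∈ Set.Icc a b, ∀ y ∈ Set.Icc a b, ‖g y‖ ≤ (1 + K) ^ N * ‖g x‖ := by
      intro x hx y hy
      rcases le_total x y with hxy | hxy
      · exact (harnack_chain hs0 (by linarith) step N x hx y hy hxy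
          (by have := hx.1; have := hy.2; linarith)).1
      · exact (harnack_chain hs0 (by linarith) step N y hy x hx hxy
          (by have := hy.1; have := hx.2; linarith)).2
    exact sSup_le_mul_sInf_of_pointwise hab (by positivity) key
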